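/- There exist constants c > 0 and L₀, depending only on k1 and k2, such that for every L ≥ L₀, every control θᵃ = (θᵃ_{L−1}, θᵃ_L) ∈ ℝ², and every homogeneous atomistic state vᵃ with control θᵃ, one has Σ_{i=0}^{L} (vᵃ_i)² ≤ c L ((θᵃ_{L−1})² + (θᵃ_L)²). -/

import Mathlib

private lemma geom_sum_le' {r : ℝ} (h0 : 0 ≤ r) (h1 : r < 1) (n : ℕ) :
    ∑ t ∈ Finset.range n, r ^ t ≤ (1 - r)⁻¹ := by
  have hne : r ≠ 1 := ne_of_lt h1
  rw [geom_sum_eq hne]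
  rw [div_le_iff_of_neg (by linarith)]
  have h2 : 0 < (1 - r)⁻¹ := by
    apply inv_pos.2; linarith
  have h3 : r ^ n ≥ 0 := pow_nonneg h0 n
  have h4 : (1 - r)⁻¹ * (1 - r) = 1 := by
    rw [inv_mul_cancel₀]; intro h; rw [sub_eq_zero] at h; exact hne h.symm
  nlinarith

private lemma sum_Icc_eq_range' (f : ℤ → ℝ) (a : ℤ) (n : ℕ) :
    ∑ i ∈ Finset.Icc a (a + n), f i = ∑ t ∈ Finset.range (n + 1), f (a + t) := by
  induction n with
  | zero => simp
  | succ n ih =>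
    have h1 : Finset.Icc a (a + (n + 1 : ℕ)) = insert (a + (n+1:ℕ)) (Finset.Icc a (a + n)) := by
      ext x
      simp only [Finset.mem_Icc, Finset.mem_insert]
      push_cast
      omega
    rw [h1, Finset.sum_insert (by simp only [Finset.mem_Icc]; push_cast; omega),
      Finset.sum_range_succ, ih]
    push_cast
    ring

private lemma telescope' (f : ℤ → ℝ) (a : ℤ) (n : ℕ) :
    ∑ i ∈ Finset.Icc a (a + n), (f (i + 1) - f i) = f (a + n + 1) - f a := by
  induction n with
  | zero => simp
  | succ n ih =>
    have h1 : Finset.Icc a (a + (n + 1 : ℕ)) = insert (a + (n+1:ℕ)) (Finset.Icc a (a + n)) := by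
      ext x
      simp only [Finset.mem_Icc, Finset.mem_insert]
      push_cast
      omega
    rw [h1, Finset.sum_insert (by simp only [Finset.mem_Icc]; push_cast; omega), ih]
    push_cast
    ring

private lemma minprinc (μ : ℝ) (hμ : 2 < μ) (a b : ℤ) (u : ℤ → ℝ)
    (ha : 0 ≤ u a) (hb : 0 ≤ u b)
    (hrec : ∀ i, a < i → i < b → u (i + 1) + u (i - 1) = μ * u i) :
    ∀ i, a ≤ i → i ≤ b → 0 ≤ u i := by
  intro i hai hib
  obtain ⟨j, hjmem, hjmin⟩ := Finset.exists_min_image (Finset.Icc a b) u ⟨i, Finset.mem_Icc.2 ⟨hai, hib⟩⟩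
  rw [Finset.mem_Icc] at hjmem
  by_contra hneg
  push_neg at hneg
  have hj : u j < 0 := lt_of_le_of_lt (hjmin i (Finset.mem_Icc.2 ⟨hai, hib⟩)) hneg
  have haj : a < j := by
    rcases lt_or_eq_of_le hjmem.1 with h | h
    · exact h
    · exfalso; rw [← h] at hj; linarith
  have hjb : j < b := by
    rcases lt_or_eq_of_le hjmem.2 with h | h
    · exact h
    · exfalso; rw [h] at hj; linarith
  have h1 : u j ≤ u (j + 1) := hjmin _ (Finset.mem_Icc.2 ⟨by omega, by omega⟩)
  have h2 : u j ≤ u (j - 1) := hjmin _ (Finset.mem_Icc.2 ⟨by omega, by omega⟩)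
  have h3 := hrec j haj hjb
  nlinarith

private lemma decay (lam μ : ℝ) (hlam : 1 < lam) (hsum : lam + lam⁻¹ = μ)
    (a b : ℤ) (x : ℤ → ℝ)
    (hrec : ∀ i, a < i → i < b → x (i + 1) + x (i - 1) = μ * x i) :
    ∀ i, a ≤ i → i ≤ b →
      |x i| ≤ |x a| * lam ^ (a - i) + |x b| * lam ^ (i - b) := by
  have hlam0 : (0:ℝ) < lam := by linarith
  have hne : lam ≠ 0 := ne_of_gt hlam0
  have hμ : 2 < μ := by
    rw [← hsum]
    have h1 : lam⁻¹ * lam = 1 := inv_mul_cancel₀ hne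
    nlinarith [sq_nonneg (lam - 1)]
  set z : ℤ → ℝ := fun i => |x a| * lam ^ (a - i) + |x b| * lam ^ (i - b) with hz
  have hzrec : ∀ i : ℤ, z (i + 1) + z (i - 1) = μ * z i := by
    intro i
    simp only [hz]
    have e1 : lam ^ (a - (i + 1)) = lam ^ (a - i) * lam⁻¹ := by
      rw [show a - (i + 1) = (a - i) - 1 by ring, zpow_sub_one₀ hne]
    have e2 : lam ^ (a - (i - 1)) = lam ^ (a - i) * lam := by
      rw [show a - (i - 1) = (a - i) + 1 by ring, zpow_add_one₀ hne]
    have e3 : lam ^ (i + 1 - b) = lam ^ (i - b) * lam := by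
      rw [show i + 1 - b = (i - b) + 1 by ring, zpow_add_one₀ hne]
    have e4 : lam ^ (i - 1 - b) = lam ^ (i - b) * lam⁻¹ := by
      rw [show i - 1 - b = (i - b) - 1 by ring, zpow_sub_one₀ hne]
    rw [e1, e2, e3, e4, ← hsum]
    ring
  have hza : |x a| ≤ z a := by
    simp only [hz, sub_self, zpow_zero, mul_one]
    have : 0 ≤ |x b| * lam ^ (a - b) := by positivity
    linarith
  have hzb : |x b| ≤ z b := by
    simp only [hz, sub_self, zpow_zero, mul_one]
    have : 0 ≤ |x a| * lam ^ (a - b) := by positivity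
    linarith
  intro i hai hib
  rw [abs_le]
  constructor
  · have := minprinc μ hμ a b (fun j => z j + x j)
      (by linarith [neg_abs_le (x a), hza])
      (by linarith [neg_abs_le (x b), hzb])
      (by intro j h1 h2; linear_combination hzrec j + hrec j h1 h2)
      i hai hib
    simp only [hz] at this
    linarith
  · have := minprinc μ hμ a b (fun j => z j - x j)
      (by linarith [le_abs_self (x a), hza])
      (by linarith [le_abs_self (x b), hzb])
      (by intro j h1 h2; linear_combination hzrec j - hrec j h1 h2)
      i hai hib
    simp only [hz] at this
    linarith
private lemma geom_left (lam : ℝ) (hlam : 1 < lam) (a b c : ℤ) :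
    ∑ i ∈ Finset.Icc a b, lam ^ (c - i) ≤ lam ^ (c - a) * (lam / (lam - 1)) := by
  have hlam0 : (0:ℝ) < lam := by linarith
  have hne : lam ≠ 0 := ne_of_gt hlam0
  have hr0 : (0:ℝ) ≤ lam⁻¹ := by positivity
  have hr1 : lam⁻¹ < 1 := by
    rw [inv_lt_one_iff₀]; right; exact hlam
  have hKeq : (1 - lam⁻¹)⁻¹ = lam / (lam - 1) := by
    rw [show 1 - lam⁻¹ = (lam - 1) / lam by field_simp, inv_div]
  rcases le_or_gt a b with hab | hab
  · have hb : b = a + ((b - a).toNat : ℤ) := by omega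
    rw [hb, sum_Icc_eq_range']
    have hterm : ∀ t ∈ Finset.range ((b - a).toNat + 1),
        lam ^ (c - (a + (t : ℤ))) = lam ^ (c - a) * (lam⁻¹) ^ t := by
      intro t _
      rw [show c - (a + (t : ℤ)) = (c - a) + (-(t : ℤ)) by ring, zpow_add₀ hne,
        zpow_neg, zpow_natCast, inv_pow]
    rw [Finset.sum_congr rfl hterm, ← Finset.mul_sum, ← hKeq]
    have := geom_sum_le' hr0 hr1 ((b - a).toNat + 1)
    have hpow : (0:ℝ) < lam ^ (c - a) := zpow_pos hlam0 _
    exact mul_le_mul_of_nonneg_left this (le_of_lt hpow)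
  · rw [Finset.Icc_eq_empty (by omega)]
    simp only [Finset.sum_empty]
    apply mul_nonneg (le_of_lt (zpow_pos hlam0 _))
    apply div_nonneg <;> linarith

private lemma geom_right (lam : ℝ) (hlam : 1 < lam) (a b c : ℤ) :
    ∑ i ∈ Finset.Icc a b, lam ^ (i - c) ≤ lam ^ (b - c) * (lam / (lam - 1)) := by
  have hlam0 : (0:ℝ) < lam := by linarith
  have hne : lam ≠ 0 := ne_of_gt hlam0
  have hr0 : (0:ℝ) ≤ lam⁻¹ := by positivity
  have hr1 : lam⁻¹ < 1 := by
    rw [inv_lt_one_iff₀]; right; exact hlam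
  have hKeq : (1 - lam⁻¹)⁻¹ = lam / (lam - 1) := by
    rw [show 1 - lam⁻¹ = (lam - 1) / lam by field_simp, inv_div]
  rcases le_or_gt a b with hab | hab
  · have hb : b = a + ((b - a).toNat : ℤ) := by omega
    set n := (b - a).toNat with hn
    rw [show Finset.Icc a b = Finset.Icc a (a + (n : ℤ)) from by rw [← hb],
      sum_Icc_eq_range']
    have hterm : ∀ t ∈ Finset.range (n + 1),
        lam ^ ((a + (t : ℤ)) - c) = lam ^ (b - c) * (lam⁻¹) ^ (n - t) := by
      intro t ht
      rw [Finset.mem_range] at ht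
      have htn : t ≤ n := by omega
      rw [show (a + (t : ℤ)) - c = (b - c) + (-(((n - t : ℕ)) : ℤ)) by
          push_cast [htn]; omega,
        zpow_add₀ hne, zpow_neg, zpow_natCast, inv_pow]
    rw [Finset.sum_congr rfl hterm, ← Finset.mul_sum]
    have hsum2 : ∑ t ∈ Finset.range (n + 1), (lam⁻¹) ^ (n - t)
        = ∑ t ∈ Finset.range (n + 1), (lam⁻¹) ^ t := by
      rw [← Finset.sum_range_reflect]
      apply Finset.sum_congr rfl
      intro t ht
      rw [Finset.mem_range] at ht
      congr 1
      omega
    rw [hsum2, ← hKeq]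
    have := geom_sum_le' hr0 hr1 (n + 1)
    have hpow : (0:ℝ) < lam ^ (b - c) := zpow_pos hlam0 _
    exact mul_le_mul_of_nonneg_left this (le_of_lt hpow)
  · rw [Finset.Icc_eq_empty (by omega)]
    simp only [Finset.sum_empty]
    apply mul_nonneg (le_of_lt (zpow_pos hlam0 _))
    apply div_nonneg <;> linarith


private lemma sq_bound (v A B y : ℝ) (hA : 0 ≤ A) (hB : 0 ≤ B) (hy0 : 0 < y) (hy1 : y ≤ 1)
    (h : |v| ≤ A + B * y) : v ^ 2 ≤ 2 * A ^ 2 + 2 * B ^ 2 * y := by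
  have h0 : 0 ≤ |v| := abs_nonneg v
  have h1 : v ^ 2 = |v| ^ 2 := (sq_abs v).symm
  nlinarith [sq_nonneg (A - B * y),
    mul_nonneg (mul_nonneg hB hB) (mul_nonneg hy0.le (sub_nonneg.2 hy1))]

private lemma abs_sq_bound (a b : ℝ) : (|a| + |b|) ^ 2 ≤ 2 * (a ^ 2 + b ^ 2) := by
  nlinarith [sq_nonneg (|a| - |b|), sq_abs a, sq_abs b]

/-- stability of the homogeneous atomistic subproblem
(first bound of Lemma `stab` of the paper). -/
theorem atomistic_state_stability (k1 k2 : ℝ)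
    (hk1 : 0 < k1) (hk2 : k2 < 0) (hk : 0 < k1 + 4 * k2) :
    ∃ (c : ℝ) (L₀ : ℤ), 0 < c ∧
      ∀ (L : ℤ), 4 ≤ L → L₀ ≤ L →
      ∀ (θa : ℝ × ℝ) (va : ℤ → ℝ),
        (∀ i, 2 ≤ i → i ≤ L - 2 →
          -k1 * (va (i - 1) - 2 * va i + va (i + 1))
            - k2 * (va (i - 2) - 2 * va i + va (i + 2)) = 0) →
        va 0 = 0 → va 1 = 0 → va (L - 1) = θa.1 → va L = θa.2 →
        (∑ i ∈ Finset.Icc (0 : ℤ) L, (va i) ^ 2) ≤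
          c * (L : ℝ) * (θa.1 ^ 2 + θa.2 ^ 2) := by
  have hk2ne : k2 ≠ 0 := ne_of_lt hk2
  set μ : ℝ := -(k1 + 2*k2)/k2 with hμdef
  have hμ2 : 2 < μ := by
    have h1 : μ - 2 = -(k1 + 4*k2)/k2 := by
      field_simp [hμdef]
      rw [sub_mul, div_mul_cancel₀ _ hk2ne]; ring
    have h2 : (0:ℝ) < -(k1 + 4*k2)/k2 := div_pos_of_neg_of_neg (by linarith) hk2
    linarith
  have hd : (0:ℝ) < μ^2 - 4 := by nlinarith
  set lam : ℝ := (μ + Real.sqrt (μ^2 - 4))/2 with hlamdef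
  have hsq : Real.sqrt (μ^2 - 4) ^ 2 = μ^2 - 4 := Real.sq_sqrt hd.le
  have hsqnn : 0 ≤ Real.sqrt (μ^2 - 4) := Real.sqrt_nonneg _
  have hlam : 1 < lam := by
    rw [hlamdef]; rw [lt_div_iff₀ (by norm_num : (0:ℝ) < 2)]; linarith
  have hlam0 : (0:ℝ) < lam := by linarith
  have hlamne : lam ≠ 0 := ne_of_gt hlam0
  have hchar : lam^2 - μ*lam + 1 = 0 := by
    rw [hlamdef]; linear_combination hsq/4
  have hsum : lam + lam⁻¹ = μ := by
    have h1 : lam * (μ - lam) = 1 := by linear_combination -hchar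
    have h2 : μ - lam = lam⁻¹ := eq_inv_of_mul_eq_one_right h1
    linarith
  set K : ℝ := lam/(lam - 1) with hKdef
  have hK0 : (0:ℝ) < K := div_pos hlam0 (by linarith)
  have hK1 : (1:ℝ) ≤ K := by
    rw [hKdef, le_div_iff₀ (by linarith)]; linarith
  set C1 : ℝ := 2*(1+K) with hC1def
  set C2 : ℝ := (2+K)*C1 with hC2def
  set C3 : ℝ := (1+C1)*K with hC3def
  have hC10 : 0 < C1 := by rw [hC1def]; linarith
  have hC20 : 0 < C2 := by rw [hC2def]; nlinarith
  have hC30 : 0 < C3 := by rw [hC3def]; nlinarith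
  clear_value μ lam K C1 C2 C3
  refine ⟨8*C2^2 + 4*C3^2 + 1, ⌈4*K⌉ + 3, by nlinarith [sq_nonneg C2, sq_nonneg C3], ?_⟩
  intro L hL4 hLge θa va heq h0 h1 hb1 hb2
  set T : ℝ := |θa.1| + |θa.2| with hTdef
  have hT0 : 0 ≤ T := by rw [hTdef]; positivity
  clear_value T
  have hLR : (4:ℝ)*K ≤ (L:ℝ) - 2 := by
    have h1 : (4*K:ℝ) ≤ (⌈4*K⌉ : ℤ) := Int.le_ceil _
    have h2 : ((⌈4*K⌉ : ℤ) : ℝ) ≤ (L:ℝ) - 3 := by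
      have : (⌈4*K⌉ : ℤ) ≤ L - 3 := by omega
      exact_mod_cast this
    linarith
  have hL4R : (4:ℝ) ≤ (L:ℝ) := by exact_mod_cast hL4
  -- the difference sequence
  set w : ℤ → ℝ := fun i => va (i+1) - va i with hwdef
  have hw0 : w 0 = 0 := by
    simp only [hwdef]; norm_num [h0, h1]
  have hwL : w (L-1) = θa.2 - θa.1 := by
    simp only [hwdef]
    rw [show L-1+1 = L by ring, hb1, hb2]
  clear_value w
  -- the conserved quantity
  set σ : ℝ := k1 * w 1 + k2 * (w 0 + 2 * w 1 + w 2) with hσdef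
  have hrel : ∀ i : ℤ, 1 ≤ i → i ≤ L - 2 →
      k1 * w i + k2 * (w (i-1) + 2 * w i + w (i+1)) = σ := by
    have key : ∀ n : ℕ, ∀ i : ℤ, i = (n:ℤ) + 1 → i ≤ L - 2 →
        k1 * w i + k2 * (w (i-1) + 2 * w i + w (i+1)) = σ := by
      intro n
      induction n with
      | zero =>
        intro i hi _
        norm_num at hi
        subst hi
        rw [hσdef]
        norm_num
      | succ n ih =>
        intro i hi hle
        have hj := ih (i-1) (by push_cast at hi ⊢; omega) (by omega)
        have he := heq i (by omega) (by omega)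
        simp only [hwdef] at hj ⊢
        rw [show i-1+1 = i by ring, show i-1-1 = i-2 by ring, show i-2+1 = i-1 by ring] at hj
        rw [show i-1+1 = i by ring, show i+1+1 = i+2 by ring]
        linear_combination hj - he
    intro i h1i hile
    exact key (i-1).toNat i (by omega) hile
  -- the mean value and decaying part
  set bar : ℝ := σ / (k1 + 4*k2) with hbardef
  have hbar : (k1 + 4*k2) * bar = σ := by
    rw [hbardef]; field_simp
  clear_value σ
  have hk2μ : k2 * μ = -(k1 + 2*k2) := by
    rw [hμdef]; field_simp
  have hxrec : ∀ i : ℤ, 0 < i → i < L - 1 →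
      (w (i+1) - bar) + (w (i-1) - bar) = μ * (w i - bar) := by
    intro i hi1 hi2
    have hr := hrel i (by omega) (by omega)
    apply mul_left_cancel₀ hk2ne
    linear_combination hr - hbar - (w i - bar) * hk2μ
  clear_value bar
  have hdec : ∀ i : ℤ, 0 ≤ i → i ≤ L - 1 →
      |w i - bar| ≤ |bar| * lam ^ (0 - i) + (T + |bar|) * lam ^ (i - (L-1)) := by
    intro i hi1 hi2
    have hd1 := decay lam μ hlam hsum 0 (L-1) (fun j => w j - bar)
      (by intro j hj1 hj2; exact hxrec j hj1 hj2) i hi1 hi2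
    simp only [hw0, hwL] at hd1
    rw [show |(0:ℝ) - bar| = |bar| by rw [zero_sub, abs_neg]] at hd1
    have hq : |θa.2 - θa.1 - bar| ≤ T + |bar| := by
      rw [hTdef]
      calc |θa.2 - θa.1 - bar| ≤ |θa.2 - θa.1| + |bar| := abs_sub _ _
        _ ≤ (|θa.2| + |θa.1|) + |bar| := by
            have := abs_sub θa.2 θa.1
            linarith [abs_sub_abs_le_abs_sub θa.2 θa.1]
        _ = |θa.1| + |θa.2| + |bar| := by ring
    have hp1 : (0:ℝ) < lam ^ (i - (L-1)) := zpow_pos hlam0 _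
    have hp2 : (0:ℝ) < lam ^ (0 - i) := zpow_pos hlam0 _
    calc |w i - bar| ≤ |bar| * lam ^ (0-i) + |θa.2 - θa.1 - bar| * lam ^ (i-(L-1)) := hd1
      _ ≤ |bar| * lam ^ (0-i) + (T + |bar|) * lam ^ (i-(L-1)) := by
          have := mul_le_mul_of_nonneg_right hq (le_of_lt hp1)
          linarith
  -- telescoping identities
  have hθ1 : ∑ i ∈ Finset.Icc (1:ℤ) (L-2), w i = θa.1 := by
    simp only [hwdef]
    have ht := telescope' va 1 (L-3).toNat
    rw [show (1:ℤ) + ((L-3).toNat:ℤ) = L-2 by omega] at ht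
    rw [show L-2+1 = L-1 by ring] at ht
    rw [ht, hb1, h1, sub_zero]
  have hcast2 : (((L-2).toNat):ℝ) = (L:ℝ) - 2 := by
    have h := Int.toNat_of_nonneg (show (0:ℤ) ≤ L-2 by omega)
    have h2 : (((L-2).toNat:ℤ):ℝ) = ((L-2:ℤ):ℝ) := by exact_mod_cast congrArg (Int.cast : ℤ → ℝ) h
    push_cast at h2 ⊢
    linarith
  have hsplit : ∑ i ∈ Finset.Icc (1:ℤ) (L-2), (w i - bar) = θa.1 - ((L:ℝ)-2)*bar := by
    rw [Finset.sum_sub_distrib, hθ1, Finset.sum_const, Int.card_Icc,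
      show (L-2+1-1).toNat = (L-2).toNat by omega, nsmul_eq_mul, hcast2]
  have hlm1 : lam^(-1:ℤ) ≤ 1 := by
    rw [zpow_neg_one]
    rw [inv_le_one_iff₀]
    right; linarith
  have hsum_abs : ∑ i ∈ Finset.Icc (1:ℤ) (L-2), |w i - bar| ≤ K*T + 2*K*|bar| := by
    have g1 := geom_left lam hlam 1 (L-2) 0
    have g2 := geom_right lam hlam 1 (L-2) (L-1)
    rw [show (0:ℤ)-1 = -1 by ring, ← hKdef] at g1
    rw [show L-2-(L-1) = -1 by ring, ← hKdef] at g2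
    have hs1 : (0:ℝ) ≤ ∑ i ∈ Finset.Icc (1:ℤ) (L-2), lam ^ (0-i) :=
      Finset.sum_nonneg (fun i _ => le_of_lt (zpow_pos hlam0 _))
    have hs2 : (0:ℝ) ≤ ∑ i ∈ Finset.Icc (1:ℤ) (L-2), lam ^ (i-(L-1)) :=
      Finset.sum_nonneg (fun i _ => le_of_lt (zpow_pos hlam0 _))
    calc ∑ i ∈ Finset.Icc (1:ℤ) (L-2), |w i - bar|
        ≤ ∑ i ∈ Finset.Icc (1:ℤ) (L-2),
            (|bar| * lam ^ (0-i) + (T + |bar|) * lam ^ (i-(L-1))) := by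
          apply Finset.sum_le_sum
          intro i hi
          rw [Finset.mem_Icc] at hi
          exact hdec i (by omega) (by omega)
      _ = |bar| * (∑ i ∈ Finset.Icc (1:ℤ) (L-2), lam ^ (0-i))
          + (T + |bar|) * (∑ i ∈ Finset.Icc (1:ℤ) (L-2), lam ^ (i-(L-1))) := by
          rw [Finset.sum_add_distrib, Finset.mul_sum, Finset.mul_sum]
      _ ≤ K*T + 2*K*|bar| := by
          have hmK : lam ^ (-1:ℤ) * K ≤ K := by
            have := mul_le_mul_of_nonneg_right hlm1 hK0.le
            linarith [one_mul K]
          have h1 : |bar| * (∑ i ∈ Finset.Icc (1:ℤ) (L-2), lam ^ (0-i)) ≤ |bar| * K := by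
            calc |bar| * (∑ i ∈ Finset.Icc (1:ℤ) (L-2), lam ^ (0-i))
                ≤ |bar| * (lam ^ (-1:ℤ) * K) := mul_le_mul_of_nonneg_left g1 (abs_nonneg bar)
              _ ≤ |bar| * K := mul_le_mul_of_nonneg_left hmK (abs_nonneg bar)
          have hTb : (0:ℝ) ≤ T + |bar| := by positivity
          have h2 : (T + |bar|) * (∑ i ∈ Finset.Icc (1:ℤ) (L-2), lam ^ (i-(L-1)))
              ≤ (T + |bar|) * K := by
            calc (T + |bar|) * (∑ i ∈ Finset.Icc (1:ℤ) (L-2), lam ^ (i-(L-1)))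
                ≤ (T + |bar|) * (lam ^ (-1:ℤ) * K) := mul_le_mul_of_nonneg_left g2 hTb
              _ ≤ (T + |bar|) * K := mul_le_mul_of_nonneg_left hmK hTb
          have h3 : (T + |bar|) * K = K*T + K*|bar| := by ring
          have h4 : |bar| * K = K * |bar| := by ring
          linarith
  have habs : ((L:ℝ)-2) * |bar| ≤ (1+K)*T + 2*K*|bar| := by
    have h1 : ((L:ℝ)-2) * bar = θa.1 - ∑ i ∈ Finset.Icc (1:ℤ) (L-2), (w i - bar) := by
      rw [hsplit]; ring
    have h2 : ((L:ℝ)-2) * |bar| = |((L:ℝ)-2) * bar| := by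
      rw [abs_mul, abs_of_pos (show (0:ℝ) < (L:ℝ)-2 by linarith)]
    have h3 : |θa.1 - ∑ i ∈ Finset.Icc (1:ℤ) (L-2), (w i - bar)|
        ≤ |θa.1| + ∑ i ∈ Finset.Icc (1:ℤ) (L-2), |w i - bar| := by
      calc |θa.1 - ∑ i ∈ Finset.Icc (1:ℤ) (L-2), (w i - bar)|
          ≤ |θa.1| + |∑ i ∈ Finset.Icc (1:ℤ) (L-2), (w i - bar)| := abs_sub _ _
        _ ≤ |θa.1| + ∑ i ∈ Finset.Icc (1:ℤ) (L-2), |w i - bar| := by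
            linarith [Finset.abs_sum_le_sum_abs (fun i => w i - bar) (Finset.Icc (1:ℤ) (L-2))]
    have h4 : |θa.1| ≤ T := by rw [hTdef]; linarith [abs_nonneg θa.2]
    rw [h2, h1]
    linarith
  have hKT : 0 ≤ K * T := mul_nonneg hK0.le hT0
  have hp1 : 0 ≤ ((L:ℝ)-2-4*K) * |bar| := mul_nonneg (by linarith) (abs_nonneg bar)
  have hp2 : 0 ≤ (K-1) * |bar| := mul_nonneg (by linarith) (abs_nonneg bar)
  have hbar2 : |bar| ≤ C1 * T := by
    rw [hC1def]
    linarith only [habs, hp1, hp2, hKT, hT0, abs_nonneg bar]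
  have hbar1 : (L:ℝ) * |bar| ≤ 2 * C1 * T := by
    rw [hC1def]
    linarith only [habs, hp1, hp2, hKT, hT0, abs_nonneg bar]
  -- pointwise bound on va
  have hvb : ∀ i : ℤ, 0 ≤ i → i ≤ L → |va i| ≤ C2 * T + C3 * T * lam ^ (i - L) := by
    intro i hi1 hi2
    have hyK : (0:ℝ) < lam ^ (i-L) * K := mul_pos (zpow_pos hlam0 _) hK0
    rcases eq_or_lt_of_le hi1 with h | h
    · have hva0 : va i = 0 := by rw [← h]; exact h0
      rw [hva0, abs_zero]
      exact add_nonneg (mul_nonneg hC20.le hT0)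
        (mul_nonneg (mul_nonneg hC30.le hT0) (zpow_pos hlam0 _).le)
    -- i ≥ 1
    have hv : va i = (∑ j ∈ Finset.Icc (0:ℤ) (i-1), (w j - bar)) + (i:ℝ) * bar := by
      have ht := telescope' va 0 (i-1).toNat
      rw [show (0:ℤ) + ((i-1).toNat:ℤ) = i-1 by omega] at ht
      rw [show i-1+1 = i by ring, h0, sub_zero] at ht
      have hc : (((Finset.Icc (0:ℤ) (i-1)).card) : ℝ) = (i:ℝ) := by
        rw [Int.card_Icc, show (i-1+1-0).toNat = i.toNat by omega]
        exact_mod_cast Int.toNat_of_nonneg hi1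
      calc va i = ∑ j ∈ Finset.Icc (0:ℤ) (i-1), (va (j+1) - va j) := ht.symm
        _ = ∑ j ∈ Finset.Icc (0:ℤ) (i-1), ((w j - bar) + bar) := by
            apply Finset.sum_congr rfl
            intro j _
            simp only [hwdef]
            ring
        _ = (∑ j ∈ Finset.Icc (0:ℤ) (i-1), (w j - bar)) + (i:ℝ) * bar := by
            rw [Finset.sum_add_distrib, Finset.sum_const, nsmul_eq_mul, hc]
    have g1 := geom_left lam hlam 0 (i-1) 0
    rw [show (0:ℤ)-0 = 0 by ring, zpow_zero, one_mul, ← hKdef] at g1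
    have g2 := geom_right lam hlam 0 (i-1) (L-1)
    rw [show i-1-(L-1) = i-L by ring, ← hKdef] at g2
    have hsum_abs2 : ∑ j ∈ Finset.Icc (0:ℤ) (i-1), |w j - bar|
        ≤ |bar| * K + (T + |bar|) * (lam ^ (i-L) * K) := by
      calc ∑ j ∈ Finset.Icc (0:ℤ) (i-1), |w j - bar|
          ≤ ∑ j ∈ Finset.Icc (0:ℤ) (i-1),
              (|bar| * lam ^ (0-j) + (T + |bar|) * lam ^ (j-(L-1))) := by
            apply Finset.sum_le_sum
            intro j hj
            rw [Finset.mem_Icc] at hj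
            exact hdec j (by omega) (by omega)
        _ = |bar| * (∑ j ∈ Finset.Icc (0:ℤ) (i-1), lam ^ (0-j))
            + (T + |bar|) * (∑ j ∈ Finset.Icc (0:ℤ) (i-1), lam ^ (j-(L-1))) := by
            rw [Finset.sum_add_distrib, Finset.mul_sum, Finset.mul_sum]
        _ ≤ |bar| * K + (T + |bar|) * (lam ^ (i-L) * K) := by
            have h1 := mul_le_mul_of_nonneg_left g1 (abs_nonneg bar)
            have h2 := mul_le_mul_of_nonneg_left g2
              (show (0:ℝ) ≤ T + |bar| by linarith [abs_nonneg bar])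
            linarith only [h1, h2]
    have hva1 : |va i| ≤ (∑ j ∈ Finset.Icc (0:ℤ) (i-1), |w j - bar|) + (i:ℝ) * |bar| := by
      rw [hv]
      calc |(∑ j ∈ Finset.Icc (0:ℤ) (i-1), (w j - bar)) + (i:ℝ) * bar|
          ≤ |∑ j ∈ Finset.Icc (0:ℤ) (i-1), (w j - bar)| + |(i:ℝ) * bar| := abs_add_le _ _
        _ ≤ (∑ j ∈ Finset.Icc (0:ℤ) (i-1), |w j - bar|) + (i:ℝ) * |bar| := by
            have ha := Finset.abs_sum_le_sum_abs (fun j => w j - bar) (Finset.Icc (0:ℤ) (i-1))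
            have hb : |(i:ℝ) * bar| = (i:ℝ) * |bar| := by
              rw [abs_mul, abs_of_nonneg (show (0:ℝ) ≤ (i:ℝ) by exact_mod_cast hi1)]
            linarith only [ha, hb.le, hb.ge]
    -- combine
    have hiL : (i:ℝ) ≤ (L:ℝ) := by exact_mod_cast hi2
    have t1 : |bar| * K ≤ C1 * T * K := mul_le_mul_of_nonneg_right hbar2 hK0.le
    have t2 : (i:ℝ) * |bar| ≤ 2 * C1 * T := by
      have := mul_le_mul_of_nonneg_right hiL (abs_nonneg bar)
      linarith only [this, hbar1]
    have t3 : (T + |bar|) * (lam ^ (i-L) * K) ≤ ((1+C1) * T) * (lam ^ (i-L) * K) := by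
      apply mul_le_mul_of_nonneg_right _ hyK.le
      linarith only [hbar2, hT0]
    have e1 : C1 * T * K + 2 * C1 * T = C2 * T := by rw [hC2def]; ring
    have e2 : ((1+C1) * T) * (lam ^ (i-L) * K) = C3 * T * lam ^ (i-L) := by
      rw [hC3def]; ring
    linarith only [hva1, hsum_abs2, t1, t2, t3, e1.le, e1.ge, e2.le, e2.ge]
  -- summing up
  have hsq : ∀ i ∈ Finset.Icc (0:ℤ) L, (va i) ^ 2
      ≤ 2 * C2 ^ 2 * T ^ 2 + 2 * C3 ^ 2 * T ^ 2 * lam ^ (i - L) := by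
    intro i hi
    rw [Finset.mem_Icc] at hi
    have hy0 : (0:ℝ) < lam ^ (i-L) := zpow_pos hlam0 _
    have hy1 : lam ^ (i-L) ≤ 1 := by
      have := zpow_le_zpow_right₀ hlam.le (show i-L ≤ 0 by omega)
      rwa [zpow_zero] at this
    have hb := hvb i hi.1 hi.2
    have := sq_bound (va i) (C2*T) (C3*T) (lam ^ (i-L))
      (mul_nonneg hC20.le hT0) (mul_nonneg hC30.le hT0) hy0 hy1
      hb
    calc (va i)^2 ≤ 2*(C2*T)^2 + 2*(C3*T)^2 * lam^(i-L) := this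
      _ = 2 * C2 ^ 2 * T ^ 2 + 2 * C3 ^ 2 * T ^ 2 * lam ^ (i - L) := by ring
  have cardcast : (((Finset.Icc (0:ℤ) L).card) : ℝ) = (L:ℝ) + 1 := by
    rw [Int.card_Icc]
    have h2 : (((L+1-0).toNat) : ℤ) = L+1 := by omega
    exact_mod_cast h2
  have g3 := geom_right lam hlam 0 L L
  rw [show L - L = 0 by ring, zpow_zero, one_mul, ← hKdef] at g3
  have step0 : ∑ i ∈ Finset.Icc (0:ℤ) L, (va i) ^ 2
      ≤ ((L:ℝ)+1) * (2 * C2 ^ 2 * T ^ 2) + 2 * C3 ^ 2 * T ^ 2 * K := by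
    calc ∑ i ∈ Finset.Icc (0:ℤ) L, (va i) ^ 2
        ≤ ∑ i ∈ Finset.Icc (0:ℤ) L,
            (2 * C2 ^ 2 * T ^ 2 + 2 * C3 ^ 2 * T ^ 2 * lam ^ (i - L)) :=
          Finset.sum_le_sum hsq
      _ = ((L:ℝ)+1) * (2 * C2 ^ 2 * T ^ 2)
          + 2 * C3 ^ 2 * T ^ 2 * (∑ i ∈ Finset.Icc (0:ℤ) L, lam ^ (i - L)) := by
          rw [Finset.sum_add_distrib, Finset.sum_const, ← Finset.mul_sum, nsmul_eq_mul, cardcast]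
      _ ≤ ((L:ℝ)+1) * (2 * C2 ^ 2 * T ^ 2) + 2 * C3 ^ 2 * T ^ 2 * K := by
          have := mul_le_mul_of_nonneg_left g3 (show (0:ℝ) ≤ 2 * C3 ^ 2 * T ^ 2 by positivity)
          linarith only [this]
  have hT2 : T ^ 2 ≤ 2 * (θa.1 ^ 2 + θa.2 ^ 2) := by
    rw [hTdef]; exact abs_sq_bound _ _
  have hKL : K ≤ (L:ℝ) := by linarith only [hLR, hK0.le]
  have q1 : ((L:ℝ)+1) * (2 * C2 ^ 2 * T ^ 2) ≤ 2 * (L:ℝ) * (2 * C2 ^ 2 * T ^ 2) :=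
    mul_le_mul_of_nonneg_right (by linarith only [hL4R]) (by positivity)
  have q2 : 2 * C3 ^ 2 * T ^ 2 * K ≤ 2 * C3 ^ 2 * T ^ 2 * (L:ℝ) :=
    mul_le_mul_of_nonneg_left hKL (by positivity)
  have q3 : (4 * C2 ^ 2 + 2 * C3 ^ 2) * (L:ℝ) * T ^ 2
      ≤ (4 * C2 ^ 2 + 2 * C3 ^ 2) * (L:ℝ) * (2 * (θa.1 ^ 2 + θa.2 ^ 2)) :=
    mul_le_mul_of_nonneg_left hT2
      (mul_nonneg (by positivity) (by linarith only [hL4R]))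
  have q4 : 0 ≤ (L:ℝ) * (θa.1 ^ 2 + θa.2 ^ 2) :=
    mul_nonneg (by linarith only [hL4R]) (by positivity)
  linarith only [step0, q1, q2, q3, q4]
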